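/- Let R be a commutative Noetherian ring with ht(𝒥(R)) ≥ 1, where 𝒥(R) is the Jacobson radical. Then dim(R/𝒥(R)) ≤ dim(R) − 1; consequently, by Bass's stable range theorem, every finitely generated stably free R-module of rank ≥ dim(R) is free provided its rank exceeds dim(R/𝒥(R)). -/

import Mathlib

open Order

/-- The height of an ideal: the infimum of the heights of the primes containing it. -/
noncomputable def idealHeight {R : Type*} [CommRing R] (I : Ideal R) : ℕ∞ :=
  ⨅ (p : PrimeSpectrum R) (_ : I ≤ p.asIdeal), Order.height p


section Aux
variable {A : Type*} [CommRing A]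

lemma BassAux.eq_top_of_sup_jacobson {I : Ideal A}
    (h : I ⊔ Ideal.jacobson (⊥ : Ideal A) = ⊤) : I = ⊤ := by
  by_contra h'
  obtain ⟨m, hm, hIm⟩ := Ideal.exists_le_maximal I h'
  have hJ : Ideal.jacobson (⊥ : Ideal A) ≤ m := sInf_le ⟨bot_le, hm⟩
  exact hm.ne_top (top_le_iff.mp ((h ▸ sup_le hIm hJ : (⊤:Ideal A) ≤ m)))

lemma BassAux.avoid (I : Ideal A) (S : Finset (Ideal A))
    (hS : ∀ q ∈ S, q ∈ I.minimalPrimes) (a0 b : A)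
    (ha : ∀ q ∈ S, a0 ∉ q) : ∃ t, ∀ q ∈ S, b + t * a0 ∉ q := by
  classical
  induction S using Finset.induction_on with
  | empty => exact ⟨0, by simp⟩
  | @insert q s hq ih =>
    obtain ⟨t, ht⟩ := ih (fun q' hq' => hS q' (Finset.mem_insert_of_mem hq'))
      (fun q' hq' => ha q' (Finset.mem_insert_of_mem hq'))
    have hqmin := hS q (Finset.mem_insert_self q s)
    have hqprime : q.IsPrime := hqmin.1.1
    by_cases hbt : b + t * a0 ∉ q
    · -- need also to keep it out of the others; t works for s already
      by_cases hall : ∀ q' ∈ s, b + t * a0 ∉ q'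
      · exact ⟨t, fun q' hq' => (Finset.mem_insert.mp hq').elim (fun h => h ▸ hbt)
          (fun h => hall q' h)⟩
      · exact ⟨t, fun q' hq' => (Finset.mem_insert.mp hq').elim (fun h => h ▸ hbt)
          (fun h => ht q' h)⟩
    · push_neg at hbt
      -- choose s0 in all q' ∈ s but not in q
      have hnle : ¬ (s.inf id ≤ q) := by
        intro hle
        obtain ⟨q', hq's, hq'le⟩ := (hqprime.inf_le').mp hle
        have hq'min := hS q' (Finset.mem_insert_of_mem hq's)
        have : q ≤ q' := hqmin.2 ⟨hq'min.1.1, hq'min.1.2⟩ hq'le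
        exact hq (le_antisymm hq'le this ▸ hq's)
      obtain ⟨s0, hs0mem, hs0q⟩ := SetLike.not_le_iff_exists.mp hnle
      refine ⟨t + s0, fun q' hq' => ?_⟩
      rcases Finset.mem_insert.mp hq' with rfl | hq's
      · intro hmem
        have : s0 * a0 ∈ q' := by
          have : b + (t + s0) * a0 - (b + t * a0) = s0 * a0 := by ring
          simpa [this] using q'.sub_mem hmem hbt
        rcases hqprime.mem_or_mem this with h | h
        · exact hs0q h
        · exact ha q' (Finset.mem_insert_self _ _) h
      · intro hmem
        have hs0 : s0 ∈ q' := by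
          have h2 : s.inf id ≤ q' := Finset.inf_le hq's
          exact h2 hs0mem
        have : b + t * a0 ∈ q' := by
          have heq : b + t * a0 = b + (t + s0) * a0 - s0 * a0 := by ring
          rw [heq]
          exact q'.sub_mem hmem (q'.mul_mem_right _ hs0)
        exact ht q' hq's this
end Aux


section Build
variable {A : Type*} [CommRing A] [IsNoetherianRing A]

lemma BassAux.finite_minimalPrimes (I : Ideal A) : I.minimalPrimes.Finite := by
  rw [Ideal.minimalPrimes_eq_comap]
  exact (minimalPrimes.finite_of_isNoetherianRing _).image _


lemma BassAux.build (a0 : A) :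
    ∀ (n : ℕ) (b : Fin n → A) (I : Ideal A) (k : ℕ),
      (∀ q : PrimeSpectrum A, q.asIdeal ∈ I.minimalPrimes → a0 ∉ q.asIdeal →
        (k : ℕ∞) ≤ Order.height q) →
      ∃ t : Fin n → A,
        ∀ q : PrimeSpectrum A,
          q.asIdeal ∈ (I ⊔ Ideal.span (Set.range fun i => b i + t i * a0)).minimalPrimes →
          a0 ∉ q.asIdeal → ((k + n : ℕ) : ℕ∞) ≤ Order.height q := by
  intro n
  induction n with
  | zero =>
    intro b I k hk
    refine ⟨Fin.elim0, fun q hq ha0 => ?_⟩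
    rw [Set.range_eq_empty, Ideal.span_empty, sup_bot_eq] at hq
    simpa using hk q hq ha0
  | succ n ih =>
    intro b I k hk
    classical
    have hfin : I.minimalPrimes.Finite := BassAux.finite_minimalPrimes I
    set S : Finset (Ideal A) := hfin.toFinset.filter (fun q => a0 ∉ q) with hSdef
    have hSmem : ∀ q ∈ S, q ∈ I.minimalPrimes := by
      intro q hq
      have := Finset.mem_filter.mp hq
      exact hfin.mem_toFinset.mp this.1
    have hSa0 : ∀ q ∈ S, a0 ∉ q := fun q hq => (Finset.mem_filter.mp hq).2
    obtain ⟨t0, ht0⟩ := BassAux.avoid I S hSmem a0 (b 0) hSa0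
    set I' : Ideal A := I ⊔ Ideal.span {b 0 + t0 * a0} with hI'def
    have hk' : ∀ q : PrimeSpectrum A, q.asIdeal ∈ I'.minimalPrimes → a0 ∉ q.asIdeal →
        ((k+1 : ℕ) : ℕ∞) ≤ Order.height q := by
      intro q hq ha0
      haveI : q.asIdeal.IsPrime := q.isPrime
      have hIq : I ≤ q.asIdeal := le_trans le_sup_left hq.1.2
      obtain ⟨p, hpmin, hple⟩ := Ideal.exists_minimalPrimes_le hIq
      have hpa0 : a0 ∉ p := fun h => ha0 (hple h)
      have hpS : p ∈ S := Finset.mem_filter.mpr ⟨hfin.mem_toFinset.mpr hpmin, hpa0⟩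
      have hnot : b 0 + t0 * a0 ∉ p := ht0 p hpS
      have hmem : b 0 + t0 * a0 ∈ q.asIdeal := by
        have : Ideal.span {b 0 + t0 * a0} ≤ q.asIdeal := le_trans le_sup_right hq.1.2
        exact this (Ideal.subset_span rfl)
      set P : PrimeSpectrum A := ⟨p, hpmin.1.1⟩ with hPdef
      have hlt : P < q := by
        refine lt_of_le_of_ne hple ?_
        intro h
        apply hnot
        rw [show p = q.asIdeal from congrArg PrimeSpectrum.asIdeal h]
        exact hmem
      have hP : (k : ℕ∞) ≤ Order.height P := hk P hpmin hpa0
      have : Order.height P + 1 ≤ Order.height q := by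
        rw [Order.height_eq_iSup_lt_height q]
        exact le_iSup₂ (f := fun y (_ : y < q) => Order.height y + 1) P hlt
      calc ((k+1 : ℕ) : ℕ∞) = (k : ℕ∞) + 1 := by push_cast; ring
        _ ≤ Order.height P + 1 := by gcongr
        _ ≤ Order.height q := this
    obtain ⟨t', ht'⟩ := ih (b ∘ Fin.succ) I' (k+1) hk'
    refine ⟨(Fin.cons t0 t' : Fin (n+1) → A), fun q hq ha0 => ?_⟩
    have hfuneq : (fun i : Fin (n+1) => b i + (Fin.cons t0 t' : Fin (n+1) → A) i * a0)
        = Fin.cons (b 0 + t0 * a0) (fun i : Fin n => (b ∘ Fin.succ) i + t' i * a0) := by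
      funext i
      induction i using Fin.cases with
      | zero => simp
      | succ j => simp
    have hideal : I ⊔ Ideal.span (Set.range fun i : Fin (n+1) => b i + (Fin.cons t0 t' : Fin (n+1) → A) i * a0)
        = I' ⊔ Ideal.span (Set.range fun i : Fin n => (b ∘ Fin.succ) i + t' i * a0) := by
      rw [hfuneq, Fin.range_cons, Ideal.span_insert, hI'def, sup_assoc]
    rw [hideal] at hq
    have := ht' q hq ha0
    have harith : ((k + (n+1) : ℕ) : ℕ∞) = ((k + 1 + n : ℕ) : ℕ∞) := by
      congr 1; ring
    rw [harith]
    exact this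
end Build


section Core
variable {A : Type*} [CommRing A] [IsNoetherianRing A]


lemma BassAux.core {n : ℕ} (hdim : ringKrullDim A < (n : WithBot ℕ∞))
    (a : Fin (n+1) → A) (ha : Ideal.span (Set.range a) = ⊤) :
    ∃ t : Fin n → A, Ideal.span (Set.range fun i => a i.succ + t i * a 0) = ⊤ := by
  obtain ⟨t, ht⟩ := BassAux.build (a 0) n (fun i => a i.succ) ⊥ 0
    (fun q _ _ => by simp)
  refine ⟨t, ?_⟩
  by_contra hne
  obtain ⟨m, hm, hIm⟩ := Ideal.exists_le_maximal _ hne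
  have ha0m : a 0 ∉ m := by
    intro h0
    apply hm.ne_top
    rw [eq_top_iff, ← ha, Ideal.span_le]
    rintro x ⟨i, rfl⟩
    induction i using Fin.cases with
    | zero => exact h0
    | succ j =>
      have h1 : a j.succ + t j * a 0 ∈ m := hIm (Ideal.subset_span ⟨j, rfl⟩)
      have h2 : t j * a 0 ∈ m := m.mul_mem_left _ h0
      simpa using m.sub_mem h1 h2
  haveI : m.IsPrime := hm.isPrime
  obtain ⟨p, hpmin, hple⟩ := Ideal.exists_minimalPrimes_le hIm
  have hpa0 : a 0 ∉ p := fun h => ha0m (hple h)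
  have hp : ((0 + n : ℕ) : ℕ∞) ≤ Order.height (⟨p, hpmin.1.1⟩ : PrimeSpectrum A) := by
    refine ht ⟨p, hpmin.1.1⟩ ?_ hpa0
    rwa [bot_sup_eq]
  have hle : (Order.height (⟨p, hpmin.1.1⟩ : PrimeSpectrum A) : WithBot ℕ∞) ≤ ringKrullDim A :=
    Order.height_le_krullDim _
  have : (n : WithBot ℕ∞) ≤ ringKrullDim A := by
    refine le_trans ?_ hle
    have : ((n : ℕ) : ℕ∞) ≤ Order.height (⟨p, hpmin.1.1⟩ : PrimeSpectrum A) := by simpa using hp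
    exact_mod_cast WithBot.coe_le_coe.mpr this
  exact absurd hdim (not_lt.mpr this)

lemma BassAux.jacobson_core {R : Type*} [CommRing R] [IsNoetherianRing R] {n : ℕ}
    (hdim : ringKrullDim (R ⧸ Ideal.jacobson (⊥ : Ideal R)) < (n : WithBot ℕ∞))
    (a : Fin (n+1) → R) (ha : Ideal.span (Set.range a) = ⊤) :
    ∃ t : Fin n → R, Ideal.span (Set.range fun i => a i.succ + t i * a 0) = ⊤ := by
  set J := Ideal.jacobson (⊥ : Ideal R) with hJ
  let mk := Ideal.Quotient.mk J
  have hmks : Function.Surjective mk := Ideal.Quotient.mk_surjective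
  have ha' : Ideal.span (Set.range fun i => mk (a i)) = ⊤ := by
    have h1 : Set.range (fun i => mk (a i)) = mk '' Set.range a := by
      rw [← Set.range_comp]; rfl
    rw [h1, ← Ideal.map_span, ha, Ideal.map_top]
  obtain ⟨t', ht'⟩ := BassAux.core hdim (fun i => mk (a i)) ha'
  set t : Fin n → R := fun i => Function.surjInv hmks (t' i) with htdef
  have hmt : ∀ i, mk (t i) = t' i := fun i => Function.surjInv_eq hmks (t' i)
  refine ⟨t, ?_⟩
  set Ib : Ideal R := Ideal.span (Set.range fun i => a i.succ + t i * a 0) with hIb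
  have hmap : Ideal.map mk Ib = ⊤ := by
    rw [hIb, Ideal.map_span, ← ht']
    congr 1
    have hfun : (⇑mk ∘ fun i => a i.succ + t i * a 0)
        = fun i => mk (a i.succ) + t' i * mk (a 0) := by
      funext i
      simp [Function.comp, map_add, map_mul, hmt]
    rw [← Set.range_comp, hfun]
  have hsup : Ib ⊔ J = ⊤ := by
    have h1 : Ideal.comap mk (Ideal.map mk Ib) = Ib ⊔ Ideal.comap mk ⊥ :=
      Ideal.comap_map_of_surjective mk hmks Ib
    have h2 : Ideal.comap mk (⊥ : Ideal (R ⧸ J)) = J := by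
      rw [← RingHom.ker_eq_comap_bot]
      exact Ideal.mk_ker
    rw [hmap, Ideal.comap_top, h2] at h1
    exact h1.symm
  by_contra hne
  obtain ⟨m, hm, hIm⟩ := Ideal.exists_le_maximal _ hne
  have hJm : J ≤ m := sInf_le ⟨bot_le, hm⟩
  exact hm.ne_top (top_le_iff.mp (hsup ▸ sup_le hIm hJm : (⊤:Ideal R) ≤ m))


section Lin
variable {R : Type*} [CommRing R]

/-- Shearing automorphism `w ↦ w + φ(w) • u` for `φ u = 0`. -/
def BassAux.shear {M : Type*} [AddCommGroup M] [Module R M]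
    (φ : M →ₗ[R] R) (u : M) (h : φ u = 0) : M ≃ₗ[R] M where
  toFun w := w + φ w • u
  map_add' a b := by simp [add_smul]; abel
  map_smul' c a := by simp [mul_smul]
  invFun w := w - φ w • u
  left_inv w := by simp [map_add, map_smul, h]
  right_inv w := by simp [map_sub, map_smul, h]

@[simp] lemma BassAux.shear_apply {M : Type*} [AddCommGroup M] [Module R M]
    (φ : M →ₗ[R] R) (u : M) (h : φ u = 0) (w : M) :
    BassAux.shear φ u h w = w + φ w • u := rfl

/-- Splitting off the 0-th coordinate. -/
def BassAux.finSplit (R : Type*) [CommRing R] (n : ℕ) :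
    (Fin (n+1) → R) ≃ₗ[R] (Fin n → R) × R where
  toFun f := (f ∘ Fin.succ, f 0)
  map_add' f g := rfl
  map_smul' c f := rfl
  invFun p := (Fin.cons p.2 p.1 : Fin (n+1) → R)
  left_inv f := by
    funext i
    induction i using Fin.cases with
    | zero => simp
    | succ j => simp
  right_inv p := by
    ext <;> simp

@[simp] lemma BassAux.finSplit_single (R : Type*) [CommRing R] (n : ℕ) :
    BassAux.finSplit R n (Pi.single 0 1) = (0, 1) := by
  show ((Pi.single 0 1 : Fin (n+1) → R) ∘ Fin.succ, (Pi.single 0 1 : Fin (n+1) → R) 0) = (0,1)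
  refine Prod.ext ?_ ?_
  · funext i
    simp [Pi.single_eq_of_ne (Fin.succ_ne_zero i)]
  · simp

lemma BassAux.span_eq_top_of_functional {m : ℕ} (v : Fin m → R)
    (F : (Fin m → R) →ₗ[R] R) (hF : F v = 1) :
    Ideal.span (Set.range v) = ⊤ := by
  rw [Ideal.eq_top_iff_one]
  have hv : v = ∑ i, v i • (fun j => if i = j then (1:R) else 0) := pi_eq_sum_univ v
  have h1 : F v = ∑ i, v i * F (fun j => if i = j then (1:R) else 0) := by
    conv_lhs => rw [hv]
    rw [map_sum]
    simp [smul_eq_mul]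
  rw [← hF, h1]
  exact Ideal.sum_mem _ fun i _ =>
    Ideal.mul_mem_right _ _ (Ideal.subset_span ⟨i, rfl⟩)

lemma BassAux.cancel_key {M' N' : Type*} [AddCommGroup M'] [Module R M']
    [AddCommGroup N'] [Module R N']
    (σ : (M' × R) ≃ₗ[R] (N' × R)) (hσ : σ.symm (0,1) = (0,1)) (x : M') :
    (σ.symm ((σ (x,0)).1, 0)).1 = x := by
  have h1 : ((σ (x,0)).1, (0:R)) = σ (x,0) - (σ (x,0)).2 • ((0:N'),(1:R)) := by
    ext <;> simp
  rw [h1, map_sub, σ.symm_apply_apply, map_smul, hσ]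
  simp

lemma BassAux.cancel {M N : Type*} [AddCommGroup M] [Module R M]
    [AddCommGroup N] [Module R N]
    (θ : (M × R) ≃ₗ[R] (N × R)) (hθ : θ (0,1) = (0,1)) :
    Nonempty (M ≃ₗ[R] N) := by
  have hθ' : θ.symm (0,1) = (0,1) := by
    rw [← hθ, θ.symm_apply_apply]
  let f : M →ₗ[R] N := (LinearMap.fst R N R).comp (θ.toLinearMap.comp (LinearMap.inl R M R))
  let g : N →ₗ[R] M := (LinearMap.fst R M R).comp (θ.symm.toLinearMap.comp (LinearMap.inl R N R))
  refine ⟨LinearEquiv.ofLinear f g ?_ ?_⟩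
  · ext x
    have := BassAux.cancel_key θ.symm (by rw [LinearEquiv.symm_symm]; exact hθ) x
    simpa [f, g] using this
  · ext x
    have := BassAux.cancel_key θ hθ' x
    simpa [f, g] using this
end Lin

section Reduce
variable {R : Type*} [CommRing R] [IsNoetherianRing R]

lemma BassAux.exists_equiv_single {n : ℕ}
    (hdim : ringKrullDim (R ⧸ Ideal.jacobson (⊥ : Ideal R)) < (n : WithBot ℕ∞))
    (v : Fin (n+1) → R) (hv : Ideal.span (Set.range v) = ⊤) :
    ∃ g : (Fin (n+1) → R) ≃ₗ[R] (Fin (n+1) → R), g v = Pi.single 0 1 := by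
  obtain ⟨t, ht⟩ := BassAux.jacobson_core hdim v hv
  set u1 : Fin (n+1) → R := (Fin.cons 0 t : Fin (n+1) → R) with hu1
  have hu1z : (LinearMap.proj (0 : Fin (n+1)) : (Fin (n+1) → R) →ₗ[R] R) u1 = 0 := by
    simp [hu1]
  set b : Fin (n+1) → R := BassAux.shear (LinearMap.proj (0 : Fin (n+1))) u1 hu1z v with hb
  have hb0 : b 0 = v 0 := by simp [hb, hu1]
  have hbs : ∀ i : Fin n, b i.succ = v i.succ + t i * v 0 := by
    intro i
    simp [hb, hu1, smul_eq_mul]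
    ring
  have hbspan : Ideal.span (Set.range fun i : Fin n => b i.succ) = ⊤ := by
    have hfe : (fun i : Fin n => b i.succ) = fun i => v i.succ + t i * v 0 := funext hbs
    rw [hfe, ht]
  have hmem : (1 - b 0) ∈ Ideal.span (Set.range fun i : Fin n => b i.succ) := by
    rw [hbspan]; trivial
  obtain ⟨c', hc'⟩ := (Submodule.mem_span_range_iff_exists_fun R).mp hmem
  set φc : (Fin (n+1) → R) →ₗ[R] R := ∑ i : Fin n, c' i • LinearMap.proj i.succ with hφ
  have hφapp : ∀ w : Fin (n+1) → R, φc w = ∑ i : Fin n, c' i * w i.succ := by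
    intro w
    simp [hφ, LinearMap.sum_apply, LinearMap.smul_apply, smul_eq_mul]
  have hφsingle : φc (Pi.single 0 1) = 0 := by
    rw [hφapp]
    refine Finset.sum_eq_zero fun i _ => ?_
    rw [Pi.single_eq_of_ne (Fin.succ_ne_zero i)]
    ring
  set b2 : Fin (n+1) → R := BassAux.shear φc (Pi.single 0 1) hφsingle b with hb2
  have hφb : φc b = 1 - b 0 := by
    rw [hφapp]
    simpa [smul_eq_mul] using hc'
  have hb20 : b2 0 = 1 := by
    have : b2 0 = b 0 + φc b * (Pi.single 0 1 : Fin (n+1) → R) 0 := rfl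
    rw [this, hφb]
    simp
  have hb2s : ∀ i : Fin n, b2 i.succ = b i.succ := by
    intro i
    have : b2 i.succ = b i.succ + φc b * (Pi.single 0 1 : Fin (n+1) → R) i.succ := rfl
    rw [this, Pi.single_eq_of_ne (Fin.succ_ne_zero i)]
    ring
  set u3 : Fin (n+1) → R := (Fin.cons 0 (fun i => - b2 i.succ) : Fin (n+1) → R) with hu3
  have hu3z : (LinearMap.proj (0 : Fin (n+1)) : (Fin (n+1) → R) →ₗ[R] R) u3 = 0 := by
    simp [hu3]
  refine ⟨(BassAux.shear (LinearMap.proj (0 : Fin (n+1))) u1 hu1z |>.trans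
      (BassAux.shear φc (Pi.single 0 1) hφsingle)).trans
      (BassAux.shear (LinearMap.proj (0 : Fin (n+1))) u3 hu3z), ?_⟩
  have happ : ((BassAux.shear (LinearMap.proj (0 : Fin (n+1))) u1 hu1z |>.trans
      (BassAux.shear φc (Pi.single 0 1) hφsingle)).trans
      (BassAux.shear (LinearMap.proj (0 : Fin (n+1))) u3 hu3z)) v
      = b2 + b2 0 • u3 := rfl
  rw [happ]
  funext i
  induction i using Fin.cases with
  | zero =>
    simp [hu3, hb20, Pi.single_eq_same]
  | succ j =>
    simp [hu3, hb20, Pi.single_eq_of_ne (Fin.succ_ne_zero j)]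
end Reduce

section Main
variable {R : Type*} [CommRing R]

/-- `(Q × R^{s+1}) ≃ (Q × R^s) × R`. -/
def BassAux.prodSplit (Q : Type*) [AddCommGroup Q] [Module R Q] (s : ℕ) :
    (Q × (Fin (s+1) → R)) ≃ₗ[R] ((Q × (Fin s → R)) × R) where
  toFun x := ((x.1, x.2 ∘ Fin.succ), x.2 0)
  map_add' x y := rfl
  map_smul' c x := rfl
  invFun p := (p.1.1, (Fin.cons p.2 p.1.2 : Fin (s+1) → R))
  left_inv x := by
    refine Prod.ext rfl ?_
    funext i
    induction i using Fin.cases with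
    | zero => simp
    | succ j => simp
  right_inv p := by
    refine Prod.ext (Prod.ext rfl ?_) rfl
    funext i
    simp

/-- `Q × R^0 ≃ Q`. -/
def BassAux.prodZero (Q : Type*) [AddCommGroup Q] [Module R Q] :
    (Q × (Fin 0 → R)) ≃ₗ[R] Q where
  toFun x := x.1
  map_add' x y := rfl
  map_smul' c x := rfl
  invFun q := (q, fun i => i.elim0)
  left_inv x := by
    refine Prod.ext rfl ?_
    funext i
    exact i.elim0
  right_inv q := rfl

lemma BassAux.main [IsNoetherianRing R] :
    ∀ (s : ℕ) (Q : Type*) (iQ : AddCommGroup Q) (mQ : Module R Q) (t : ℕ), s ≤ t →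
      ((Q × (Fin s → R)) ≃ₗ[R] (Fin t → R)) →
      ringKrullDim (R ⧸ Ideal.jacobson (⊥ : Ideal R)) < ((t - s : ℕ) : WithBot ℕ∞) →
      Module.Free R Q := by
  intro s
  induction s with
  | zero =>
    intro Q iQ mQ t _ e _
    exact Module.Free.of_equiv ((BassAux.prodZero Q).symm.trans e).symm
  | succ s ih =>
    intro Q iQ mQ t hst e hd
    match t, hst with
    | (m+1), hst =>
      have hsm : s ≤ m := Nat.succ_le_succ_iff.mp hst
      have hd' : ringKrullDim (R ⧸ Ideal.jacobson (⊥ : Ideal R))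
          < ((m - s : ℕ) : WithBot ℕ∞) := by
        rwa [Nat.succ_sub_succ] at hd
      -- the composite equivalence
      set ψ : ((Q × (Fin s → R)) × R) ≃ₗ[R] (Fin (m+1) → R) :=
        (BassAux.prodSplit Q s).symm.trans e with hψ
      set v : Fin (m+1) → R := ψ ((0, 0), 1) with hv
      have hFv : ((LinearMap.snd R (Q × (Fin s → R)) R).comp ψ.symm.toLinearMap) v = 1 := by
        simp [hv]
      have hspan : Ideal.span (Set.range v) = ⊤ :=
        BassAux.span_eq_top_of_functional v _ hFv
      have hdm : ringKrullDim (R ⧸ Ideal.jacobson (⊥ : Ideal R))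
          < ((m : ℕ) : WithBot ℕ∞) := by
        refine lt_of_lt_of_le hd' ?_
        have : ((m - s : ℕ) : ℕ∞) ≤ ((m : ℕ) : ℕ∞) := by
          exact_mod_cast Nat.sub_le m s
        exact_mod_cast WithBot.coe_le_coe.mpr this
      obtain ⟨g, hg⟩ := BassAux.exists_equiv_single hdm v hspan
      set θ : ((Q × (Fin s → R)) × R) ≃ₗ[R] ((Fin m → R) × R) :=
        (ψ.trans g).trans (BassAux.finSplit R m) with hθdef
      have hθ : θ ((0, 0), 1) = (0, 1) := by
        have h1 : θ ((0, 0), 1) = (BassAux.finSplit R m) (g v) := rfl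
        rw [h1, hg, BassAux.finSplit_single]
      obtain ⟨e'⟩ := BassAux.cancel θ hθ
      exact ih Q iQ mQ m hsm e' hd'
end Main



lemma BassAux.dimQuot (R : Type*) [CommRing R]
    (hfin : ringKrullDim R < ⊤)
    (hht : 1 ≤ idealHeight (Ideal.jacobson (⊥ : Ideal R))) :
    ringKrullDim (R ⧸ Ideal.jacobson (⊥ : Ideal R)) + 1 ≤ ringKrullDim R := by
  set J := Ideal.jacobson (⊥ : Ideal R) with hJ
  by_cases hne : Nonempty (PrimeSpectrum (R ⧸ J))
  · have hdq : ringKrullDim (R ⧸ J)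
        = ((⨆ p : PrimeSpectrum (R ⧸ J), Order.height p : ℕ∞) : WithBot ℕ∞) :=
      Order.krullDim_eq_iSup_height_of_nonempty
    have hlt : ringKrullDim (R ⧸ J) < ⊤ := lt_of_le_of_lt (ringKrullDim_quotient_le _) hfin
    set S : ℕ∞ := ⨆ p : PrimeSpectrum (R ⧸ J), Order.height p with hS
    have hSne : S ≠ ⊤ := by
      intro h
      rw [hdq, h] at hlt
      simp at hlt
    obtain ⟨nn, hnn0⟩ := WithTop.ne_top_iff_exists.mp hSne
    have hnn : (nn : ℕ∞) = S := by exact_mod_cast hnn0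
    -- find a prime of height ≥ nn
    have hex : ∃ p : PrimeSpectrum (R ⧸ J), (nn : ℕ∞) ≤ Order.height p := by
      by_contra hall
      push_neg at hall
      cases nn with
      | zero =>
        obtain ⟨p⟩ := hne
        exact absurd (hall p) (by simp)
      | succ k =>
        have hsup : S ≤ (k : ℕ∞) := by
          refine iSup_le fun p => ?_
          have := hall p
          rw [show (((k+1 : ℕ)) : ℕ∞) = (k : ℕ∞) + 1 by push_cast; ring] at this
          exact Order.le_of_lt_add_one this
        rw [← hnn] at hsup
        have : (k+1 : ℕ) ≤ k := by exact_mod_cast hsup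
        omega
    obtain ⟨p, hp⟩ := hex
    obtain ⟨ch, _hlast, hlen⟩ := Order.exists_series_of_le_height p hp
    -- map the chain to Spec R
    have hmono : Monotone (PrimeSpectrum.comap (Ideal.Quotient.mk J)) := by
      intro x y hxy
      exact Ideal.comap_mono hxy
    have hstrict : StrictMono (PrimeSpectrum.comap (Ideal.Quotient.mk J)) :=
      hmono.strictMono_of_injective
        (PrimeSpectrum.comap_injective_of_surjective _ Ideal.Quotient.mk_surjective)
    set ch' := ch.map _ hstrict with hch'
    have hJhead : J ≤ ch'.head.asIdeal := by
      have hh : ch'.head = PrimeSpectrum.comap (Ideal.Quotient.mk J) ch.head := by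
        simp [hch', RelSeries.head]
        rfl
      rw [hh]
      intro x hx
      show Ideal.Quotient.mk J x ∈ ch.head.asIdeal
      rw [Ideal.Quotient.eq_zero_iff_mem.mpr hx]
      exact zero_mem _
    have hht1 : (1 : ℕ∞) ≤ Order.height ch'.head := by
      refine le_trans hht ?_
      exact iInf_le_of_le ch'.head (iInf_le _ hJhead)
    have hnotmin : ¬ IsMin ch'.head := by
      intro h
      rw [← Order.height_eq_zero] at h
      rw [h] at hht1
      simp at hht1
    obtain ⟨q, hq⟩ := not_isMin_iff.mp hnotmin
    set ch'' := ch'.cons q hq with hch''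
    have hlen'' : ((ch''.length : ℕ∞) : WithBot ℕ∞) ≤ ringKrullDim R :=
      Order.LTSeries.length_le_krullDim ch''
    have hlen''eq : ch''.length = nn + 1 := by
      simp [hch'', hch', hlen]
    rw [hdq, ← hnn]
    rw [hlen''eq] at hlen''
    refine le_trans (le_of_eq ?_) hlen''
    push_cast
    rfl
  · rw [not_nonempty_iff] at hne
    have : ringKrullDim (R ⧸ J) = ⊥ := Order.krullDim_eq_bot_iff.mpr hne
    rw [this]
    simp

/-- If the Jacobson radical of a Noetherian ring `R` of finite Krull dimension
has height `≥ 1`, then `dim(R/𝒥(R)) ≤ dim R − 1`; consequently (Bass), every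
finitely generated stably free `R`-module whose rank is at least `dim R` and
exceeds `dim(R/𝒥(R))` is free. -/
theorem dim_quotient_jacobson_le_and_stablyFree_free
    (R : Type u) [CommRing R] [IsNoetherianRing R]
    (hfin : ringKrullDim R < ⊤)
    (hht : 1 ≤ idealHeight (Ideal.jacobson (⊥ : Ideal R))) :
    ringKrullDim (R ⧸ Ideal.jacobson (⊥ : Ideal R)) + 1 ≤ ringKrullDim R ∧
    ∀ (Q : Type u) (_ : AddCommGroup Q) (_ : Module R Q) (s t : ℕ), s ≤ t →
      Module.Finite R Q →
      Nonempty ((Q × (Fin s → R)) ≃ₗ[R] (Fin t → R)) →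
      ringKrullDim R ≤ ((t - s : ℕ) : WithBot ℕ∞) →
      ringKrullDim (R ⧸ Ideal.jacobson (⊥ : Ideal R)) < ((t - s : ℕ) : WithBot ℕ∞) →
      Module.Free R Q := by
  refine ⟨BassAux.dimQuot R hfin hht, ?_⟩
  intro Q iQ mQ s t hst _ he _ h2
  obtain ⟨e⟩ := he
  exact BassAux.main s Q iQ mQ t hst e h2
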